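/- If \widehat{T}' is a marked tree and \widehat{T} = π(\widehat{T}'), with reduced configurations C' = R(f(\widehat{T}')) and C = R(f(\widehat{T})), then W(C' → C) ≠ 0, i.e., the TASEP allows a transition from C' to C. -/

import Mathlib

/-- Plane binary trees: every internal vertex has exactly two ordered children. -/
inductive PTree where
  | leaf : PTree
  | node : PTree → PTree → PTree
  deriving DecidableEq

namespace PTree

/-- number of leaves (endpoints) -/
def numLeaves : PTree → ℕ
  | leaf => 1
  | node l r => numLeaves l + numLeaves r

/-- directions of the leaves of a subtree which is itself a `b`-child
(`true` = left child, `false` = right child), in left-to-right order. -/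
def dirsAux : PTree → Bool → List Bool
  | leaf, b => [b]
  | node l r, _ => dirsAux l true ++ dirsAux r false

/-- the left/right-child directions of all leaves of a tree, left to right
(`true` = left child, `false` = right child). -/
def dirs : PTree → List Bool
  | leaf => []
  | node l r => dirsAux l true ++ dirsAux r false

/-- The reduction map `R`: the directions of the 2nd through (n+1)-th leaves;
`true` = • (occupied site, left child), `false` = ∘ (empty site, right child). -/
def red (T : PTree) : List Bool := ((dirs T).drop 1).dropLast

/-- number of internal vertices on the path from the leftmost leaf to the root
(root included). -/
def lCount : PTree → ℕ
  | leaf => 0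
  | node l _ => lCount l + 1

/-- number of internal vertices on the path from the rightmost leaf to the root
(root included). -/
def rCount : PTree → ℕ
  | leaf => 0
  | node _ r => rCount r + 1

/-- number of last branching vertices (internal vertices whose two children are leaves). -/
def lbCount : PTree → ℕ
  | leaf => 0
  | node leaf leaf => 1
  | node l r => lbCount l + lbCount r

end PTree

/-- Marked plane binary trees: a plane binary tree with exactly one of its
last branching vertices marked (the constructor `mark` is the marked vertex,
a vertex with two leaf children). -/
inductive MTree where
  | mark : MTree
  | nodeL : MTree → PTree → MTree
  | nodeR : PTree → MTree → MTree
  deriving DecidableEq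

namespace MTree

/-- forgetful map to plane binary trees -/
def forget : MTree → PTree
  | mark => .node .leaf .leaf
  | nodeL l r => .node (forget l) r
  | nodeR l r => .node l (forget r)

/-- collapse the marked vertex (with its two leaf children) to a single leaf. -/
def collapseT : MTree → PTree
  | mark => .leaf
  | nodeL l r => .node (collapseT l) r
  | nodeR l r => .node l (collapseT r)

/-- index (left to right, starting from 0) of the leaf of `collapseT` obtained
by collapsing the marked vertex. -/
def markIdx : MTree → ℕ
  | mark => 0
  | nodeL l _ => markIdx l
  | nodeR l r => l.numLeaves + markIdx r

end MTree

/-- replace the `i`-th leaf of a tree by a marked last branching vertex. -/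
def expand : PTree → ℕ → MTree
  | .leaf, _ => .mark
  | .node l r, i =>
      if i < l.numLeaves then .nodeL (expand l i) r
      else .nodeR l (expand r (i - l.numLeaves))

/-- index of the next right-child (`false`) leaf strictly after position `i`;
if there is none, the index of the rightmost left-child (`true`) leaf. -/
def nextFalseIdx (w : List Bool) (i : ℕ) : ℕ :=
  if (w.drop (i+1)).findIdx (fun b => !b) < (w.drop (i+1)).length
  then i + 1 + (w.drop (i+1)).findIdx (fun b => !b)
  else w.length - 1 - (w.reverse.findIdx (fun b => b))

/-- index of the closest left-child (`true`) leaf strictly before position `i`;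
if there is none, the index of the leftmost right-child (`false`) leaf. -/
def prevTrueIdx (w : List Bool) (i : ℕ) : ℕ :=
  if ((w.take i).reverse).findIdx (fun b => b) < i
  then i - 1 - ((w.take i).reverse).findIdx (fun b => b)
  else w.findIdx (fun b => !b)

/-- position of the leaf where the removed segment is re-glued by `π`. -/
def target (w : List Bool) (i : ℕ) : ℕ :=
  if w.getD i true then prevTrueIdx w i else nextFalseIdx w i

/-- The map `π` on marked trees: remove the segment joining the marked vertex to
its left (resp. right) leaf when the marked vertex is a right (resp. left) child,
and glue it to the next right- (resp. left-) child leaf to the right (resp. left),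
with the boundary rule when no such leaf exists; the new vertex is marked. -/
def piM (M : MTree) : MTree :=
  expand M.collapseT (target M.collapseT.dirs M.markIdx)

open Classical in
/-- Transition rates of the `n`-site open-boundary TASEP, on configurations
encoded as lists of booleans (`true` = •, `false` = ∘). -/
noncomputable def rate (α β : ℝ) (C C' : List Bool) : ℝ :=
  if ∃ A, C = false :: A ∧ C' = true :: A then α
  else if ∃ A, C = A ++ [true] ∧ C' = A ++ [false] then β
  else if ∃ A A', C = A ++ true :: false :: A' ∧ C' = A ++ false :: true :: A' then 1
  else 0

/-- number of active bonds of a configuration: injection at site 1 if empty,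
extraction at site n if occupied, and hops across •∘ pairs. -/
def activeCount (C : List Bool) : ℕ :=
  (if C.head? = some false then 1 else 0) +
  ((C.zip C.tail).count (true, false)) +
  (if C.getLast? = some true then 1 else 0)

/-- the weight `μ(T) = α^{-l(T)} β^{-r(T)}` of a plane binary tree. -/
noncomputable def mu (α β : ℝ) (T : PTree) : ℝ :=
  α ^ (-(T.lCount : ℤ)) * β ^ (-(T.rCount : ℤ))

/-- number of internal vertices on the path from the leftmost leaf to the root,
excluding the marked vertex. -/
def lCountM : MTree → ℕ
  | .mark => 0
  | .nodeL l _ => lCountM l + 1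
  | .nodeR l _ => l.lCount + 1

/-- number of internal vertices on the path from the rightmost leaf to the root,
excluding the marked vertex. -/
def rCountM : MTree → ℕ
  | .mark => 0
  | .nodeR _ r => rCountM r + 1
  | .nodeL _ r => r.rCount + 1

/-- the weight `μ̂` of a marked tree, excluding the marked vertex from the counts. -/
noncomputable def muHat (α β : ℝ) (M : MTree) : ℝ :=
  α ^ (-(lCountM M : ℤ)) * β ^ (-(rCountM M : ℤ))




-- ===================== auxiliary development =====================

-- ======= aux lemmas =======
lemma PTree.one_le_numLeaves (T : PTree) : 1 ≤ T.numLeaves := by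
  induction T with
  | leaf => simp [numLeaves]
  | node l r ihl ihr => simp [numLeaves]; omega

lemma PTree.length_dirsAux (T : PTree) (b : Bool) : (T.dirsAux b).length = T.numLeaves := by
  induction T generalizing b with
  | leaf => rfl
  | node l r ihl ihr => simp [dirsAux, numLeaves, ihl, ihr]

lemma MTree.markIdx_lt (M : MTree) : M.markIdx < M.collapseT.numLeaves := by
  induction M with
  | mark => simp [markIdx, collapseT, PTree.numLeaves]
  | nodeL l r ih =>
      have := r.one_le_numLeaves
      simp [markIdx, collapseT, PTree.numLeaves]; omega
  | nodeR l r ih =>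
      simp [markIdx, collapseT, PTree.numLeaves]; omega

lemma MTree.expand_collapse (M : MTree) : expand M.collapseT M.markIdx = M := by
  induction M with
  | mark => rfl
  | nodeL l r ih =>
      have h := l.markIdx_lt
      simp [collapseT, markIdx, expand, h, ih]
  | nodeR l r ih =>
      simp [collapseT, markIdx, expand, ih]

lemma dirsAux_forget_expand (T : PTree) (i : ℕ) (hi : i < T.numLeaves) (b : Bool) :
    ((expand T i).forget).dirsAux b
      = (T.dirsAux b).take i ++ true :: false :: (T.dirsAux b).drop (i+1) := by
  induction T generalizing i b with
  | leaf =>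
      have h0 : i = 0 := by simpa [PTree.numLeaves] using hi
      subst h0; rfl
  | node l r ihl ihr =>
      by_cases h : i < l.numLeaves
      · rw [expand]
        simp only [if_pos h]
        rw [MTree.forget]
        show (MTree.forget (expand l i)).dirsAux true ++ r.dirsAux false = _
        rw [ihl i h true]
        show _ = ((l.dirsAux true ++ r.dirsAux false).take i) ++ true :: false :: ((l.dirsAux true ++ r.dirsAux false).drop (i+1))
        rw [List.take_append, List.drop_append]
        have hl := l.length_dirsAux true
        rw [hl]
        have h1 : i - l.numLeaves = 0 := by omega
        have h2 : i + 1 - l.numLeaves = 0 := by omega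
        simp [h1, h2]
      · rw [expand]
        simp only [if_neg h]
        rw [MTree.forget]
        show l.dirsAux true ++ (MTree.forget (expand r (i - l.numLeaves))).dirsAux false = _
        have hr : i - l.numLeaves < r.numLeaves := by
          simp [PTree.numLeaves] at hi; omega
        rw [ihr _ hr false]
        show _ = ((l.dirsAux true ++ r.dirsAux false).take i) ++ true :: false :: ((l.dirsAux true ++ r.dirsAux false).drop (i+1))
        rw [List.take_append, List.drop_append]
        have hl := l.length_dirsAux true
        rw [hl]
        have h1 : l.numLeaves ≤ i := by omega
        have h2 : i + 1 - l.numLeaves = (i - l.numLeaves) + 1 := by omega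
        rw [h2, List.take_of_length_le (le_of_eq_of_le hl h1),
            List.drop_of_length_le (by rw [hl]; omega : (l.dirsAux true).length ≤ i + 1)]
        simp

lemma dirs_forget_expand (l r : PTree) (i : ℕ) (hi : i < (PTree.node l r).numLeaves) :
    ((expand (PTree.node l r) i).forget).dirs
      = ((PTree.node l r).dirs).take i ++ true :: false :: ((PTree.node l r).dirs).drop (i+1) := by
  have h := dirsAux_forget_expand (PTree.node l r) i hi true
  have e1 : ((expand (PTree.node l r) i).forget).dirs = ((expand (PTree.node l r) i).forget).dirsAux true := by
    rw [expand]
    split <;> simp [MTree.forget, PTree.dirs, PTree.dirsAux]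
  have e2 : (PTree.node l r).dirs = (PTree.node l r).dirsAux true := rfl
  rw [e1, e2, h]

lemma head_dirsAux_true (T : PTree) : (T.dirsAux true).head? = some true := by
  induction T with
  | leaf => rfl
  | node l r ihl ihr =>
      rw [PTree.dirsAux, List.head?_append]
      simp [ihl]

lemma getLast_dirsAux_false (T : PTree) : (T.dirsAux false).getLast? = some false := by
  induction T with
  | leaf => rfl
  | node l r ihl ihr =>
      rw [PTree.dirsAux, List.getLast?_append]
      simp [ihr]


def ins (w : List Bool) (k : ℕ) : List Bool := w.take k ++ true :: false :: w.drop (k+1)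

def red1 (l : List Bool) : List Bool := (l.drop 1).dropLast

lemma findIdx_decomp {p : Bool → Bool} {l : List Bool} (h : l.findIdx p < l.length) :
    ∃ a x b, l = a ++ x :: b ∧ a.length = l.findIdx p ∧ p x = true ∧ (∀ y ∈ a, p y = false) := by
  refine ⟨l.take (l.findIdx p), l[l.findIdx p], l.drop (l.findIdx p + 1), ?_, ?_, ?_, ?_⟩
  · rw [List.getElem_cons_drop, List.take_append_drop]
  · simp [List.length_take]; omega
  · exact List.findIdx_getElem
  · intro y hy
    rw [List.mem_iff_getElem] at hy
    obtain ⟨m, hm, rfl⟩ := hy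
    rw [List.getElem_take]
    exact List.not_of_lt_findIdx (by have := hm; rw [List.length_take] at this; omega)

lemma shape_bulk (P X : List Bool) (hX : X ≠ []) :
    red1 ((true :: P) ++ true :: false :: X) = P ++ true :: false :: X.dropLast ∧
    red1 ((true :: P) ++ false :: true :: X) = P ++ false :: true :: X.dropLast := by
  constructor
  · rw [show (true :: P) ++ true :: false :: X = true :: ((P ++ [true, false]) ++ X) by simp]
    simp [red1, List.dropLast_append_of_ne_nil hX, List.dropLast_cons_of_ne_nil hX]
  · rw [show (true :: P) ++ false :: true :: X = true :: ((P ++ [false, true]) ++ X) by simp]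
    simp [red1, List.dropLast_append_of_ne_nil hX, List.dropLast_cons_of_ne_nil hX]

lemma rep_comm (b : Bool) (r : ℕ) :
    (b :: List.replicate r b : List Bool) = List.replicate r b ++ [b] := by
  rw [← List.replicate_succ, List.replicate_succ']

lemma eq2a (Z R D : List Bool) (hR : false :: R = R ++ [false]) :
    Z ++ true :: false :: (R ++ true :: D) = (Z ++ true :: R) ++ false :: true :: D := by
  calc Z ++ true :: false :: (R ++ true :: D)
      = Z ++ true :: ((false :: R) ++ true :: D) := by simp
    _ = Z ++ true :: ((R ++ [false]) ++ true :: D) := by rw [hR]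
    _ = (Z ++ true :: R) ++ false :: true :: D := by simp

lemma eq1a (Q R Z : List Bool) (hR : true :: R = R ++ [true]) :
    Q ++ false :: (R ++ true :: false :: Z) = Q ++ false :: true :: (R ++ false :: Z) := by
  calc Q ++ false :: (R ++ true :: false :: Z)
      = Q ++ false :: ((R ++ [true]) ++ false :: Z) := by simp
    _ = Q ++ false :: ((true :: R) ++ false :: Z) := by rw [hR]
    _ = Q ++ false :: true :: (R ++ false :: Z) := by simp

lemma eq2b (R Z : List Bool) (hR : true :: R = R ++ [true]) :
    R ++ true :: false :: Z = true :: (R ++ false :: Z) := by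
  calc R ++ true :: false :: Z = (R ++ [true]) ++ false :: Z := by simp
    _ = (true :: R) ++ false :: Z := by rw [hR]
    _ = true :: (R ++ false :: Z) := by simp

lemma eq1b (Z R : List Bool) (hR : false :: R = R ++ [false]) :
    Z ++ true :: false :: R = (Z ++ true :: R) ++ [false] := by
  calc Z ++ true :: false :: R = Z ++ true :: (false :: R) := by simp
    _ = Z ++ true :: (R ++ [false]) := by rw [hR]
    _ = (Z ++ true :: R) ++ [false] := by simp

lemma shape_alpha (u : List Bool) :
    red1 (true :: false :: (u ++ [false])) = false :: u ∧
    red1 (true :: (true :: u ++ [false])) = true :: u := by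
  constructor
  · show ((false :: (u ++ [false])).dropLast) = _
    rw [show false :: (u ++ [false]) = (false :: u) ++ [false] by simp, List.dropLast_concat]
  · show ((true :: u ++ [false]).dropLast) = _
    rw [show true :: u ++ [false] = (true :: u) ++ [false] by simp, List.dropLast_concat]

lemma shape_beta (u : List Bool) :
    red1 ((true :: u) ++ [true, false]) = u ++ [true] ∧
    red1 ((true :: u ++ [false]) ++ [false]) = u ++ [false] := by
  constructor
  · show ((u ++ [true, false]).dropLast) = _
    rw [show u ++ [true, false] = (u ++ [true]) ++ [false] by simp, List.dropLast_concat]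
  · show (((u ++ [false]) ++ [false]).dropLast) = _
    rw [List.dropLast_concat]


lemma cons_self_comm {b : Bool} {a : List Bool} (h : ∀ y ∈ a, y = b) :
    b :: a = a ++ [b] := by
  induction a with
  | nil => rfl
  | cons x t ih =>
      have hx : x = b := h x List.mem_cons_self
      subst hx
      have h2 := ih (fun y hy => h y (List.mem_cons_of_mem _ hy))
      rw [List.cons_append, ← h2]

lemma key (w u : List Bool) (hw : w = true :: u ++ [false]) (i : ℕ) (hi : i < w.length) :
    (∃ A, red1 (ins w i) = false :: A ∧ red1 (ins w (target w i)) = true :: A) ∨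
    (∃ A, red1 (ins w i) = A ++ [true] ∧ red1 (ins w (target w i)) = A ++ [false]) ∨
    (∃ A A', red1 (ins w i) = A ++ true :: false :: A' ∧
      red1 (ins w (target w i)) = A ++ false :: true :: A') := by
  have hlen : w.length = u.length + 2 := by simp [hw]
  have hgd : w.getD i true = w[i] := List.getD_eq_getElem w true hi
  by_cases hb : w[i]'hi = true
  · -- marked leaf is a left child: target = prevTrueIdx
    have ht : target w i = prevTrueIdx w i := by rw [target, hgd, hb]; rfl
    have hi1' : i + 1 < w.length := by
      by_contra h
      have hieq : i = u.length + 1 := by omega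
      subst hieq
      simp [hw, List.getElem_concat_length] at hb
    have hD : w.drop (i+1) ≠ [] := by
      simp only [ne_eq, List.drop_eq_nil_iff]; omega
    have hl1 : ((w.take i).reverse).length = i := by
      simp [List.length_reverse, List.length_take]; omega
    by_cases hc : ((w.take i).reverse).findIdx (fun b => b) < i
    · -- subcase 2a: a true exists before i; bulk hop
      have hc' : ((w.take i).reverse).findIdx (fun b => b) <
          ((w.take i).reverse).length := by omega
      obtain ⟨a, x, z, hdec, hal, hpx, hall⟩ := findIdx_decomp hc'
      have hx : x = true := hpx
      subst hx
      have hQ : w.take i = z.reverse ++ true :: a.reverse := by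
        have h := congrArg List.reverse hdec
        simpa using h
      have hlens : a.length + 1 + z.length = i := by
        have h := congrArg List.length hdec
        simp [hl1] at h; omega
      have hj : target w i = z.length := by
        rw [ht, prevTrueIdx, if_pos hc, ← hal]; omega
      have hcomm : false :: a.reverse = a.reverse ++ [false] :=
        cons_self_comm (fun y hy => by simpa using hall y (List.mem_reverse.mp hy))
      have hwdec : w = w.take i ++ true :: w.drop (i+1) := by
        conv_lhs => rw [← List.take_append_drop i w,
          ← List.getElem_cons_drop hi, hb]
      have hw2 : w = z.reverse ++ true :: (a.reverse ++ true :: w.drop (i+1)) := by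
        conv_lhs => rw [hwdec, hQ]
        simp
      have htj : w.take z.length = z.reverse := by
        conv_lhs => rw [hw2]
        exact List.take_left' (by simp)
      have hdj : w.drop (z.length + 1) = a.reverse ++ true :: w.drop (i+1) := by
        conv_lhs => rw [hw2, show z.reverse ++ true :: (a.reverse ++ true :: w.drop (i+1))
          = (z.reverse ++ [true]) ++ (a.reverse ++ true :: w.drop (i+1)) by simp]
        exact List.drop_left' (by simp)
      obtain ⟨i', rfl⟩ : ∃ i', i = i' + 1 := ⟨i - 1, by omega⟩
      have hQ' : w.take (i'+1) = true :: (u ++ [false]).take i' := by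
        rw [hw]; simp
      have hins1 : ins w (i'+1)
          = (true :: (u ++ [false]).take i') ++ true :: false :: w.drop (i'+1+1) := by
        rw [ins, hQ']
      have hins2 : ins w (target w (i'+1))
          = (true :: (u ++ [false]).take i') ++ false :: true :: w.drop (i'+1+1) := by
        rw [hj, ins, htj, hdj, ← hQ', hQ]
        exact eq2a z.reverse a.reverse (w.drop (i'+1+1)) hcomm
      right; right
      obtain ⟨h1, h2⟩ := shape_bulk ((u ++ [false]).take i') (w.drop (i'+1+1)) hD
      exact ⟨(u ++ [false]).take i', (w.drop (i'+1+1)).dropLast,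
        by rw [hins1]; exact h1, by rw [hins2]; exact h2⟩
    · -- subcase 2b: i = 0, injection at the left boundary
      have hi0 : i = 0 := by
        by_contra h0
        obtain ⟨i', rfl⟩ : ∃ i', i = i' + 1 := ⟨i - 1, by omega⟩
        have hmem : true ∈ (w.take (i'+1)).reverse := by
          rw [List.mem_reverse]
          have hq : w.take (i'+1) = true :: (u ++ [false]).take i' := by rw [hw]; simp
          rw [hq]; exact List.mem_cons_self
        have hlt := List.findIdx_lt_length_of_exists (p := fun b => b) ⟨true, hmem, rfl⟩
        omega
      subst hi0
      have ht2 : target w 0 = w.findIdx (fun b => !b) := by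
        rw [ht, prevTrueIdx, if_neg hc]
      have hex : w.findIdx (fun b => !b) < w.length := by
        apply List.findIdx_lt_length_of_exists
        exact ⟨false, by simp [hw], by simp⟩
      obtain ⟨a, x, z, hdec, hal, hpx, hall⟩ := findIdx_decomp hex
      have hx : x = false := by simpa using hpx
      subst hx
      have hcomm : true :: a = a ++ [true] :=
        cons_self_comm (fun y hy => by simpa using hall y hy)
      have hj : target w 0 = a.length := by rw [ht2, hal]
      have hins1 : ins w 0 = true :: false :: (u ++ [false]) := by
        simp [ins, hw]
      have htj : w.take a.length = a := by
        conv_lhs => rw [hdec]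
        exact List.take_left' rfl
      have hdj : w.drop (a.length + 1) = z := by
        conv_lhs => rw [hdec, show a ++ false :: z = (a ++ [false]) ++ z by simp]
        exact List.drop_left' (by simp)
      have hins2 : ins w (target w 0) = true :: (true :: u ++ [false]) := by
        rw [hj, ins, htj, hdj, ← hw, hdec]
        exact eq2b a z hcomm
      left
      obtain ⟨h1, h2⟩ := shape_alpha u
      exact ⟨u, by rw [hins1]; exact h1, by rw [hins2]; exact h2⟩
  · -- marked leaf is a right child: target = nextFalseIdx
    have hb' : w[i]'hi = false := by simpa using hb
    have ht : target w i = nextFalseIdx w i := by rw [target, hgd, hb']; rfl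
    by_cases hc : (w.drop (i+1)).findIdx (fun b => !b) < (w.drop (i+1)).length
    · -- subcase 1a: a false exists after i; bulk hop
      obtain ⟨a, x, z, hdec, hal, hpx, hall⟩ := findIdx_decomp hc
      have hx : x = false := by simpa using hpx
      subst hx
      have hcomm : true :: a = a ++ [true] :=
        cons_self_comm (fun y hy => by simpa using hall y hy)
      have hj : target w i = i + 1 + a.length := by
        rw [ht, nextFalseIdx, if_pos hc, ← hal]
      have hi1 : 1 ≤ i := by
        rcases Nat.eq_zero_or_pos i with h0 | h
        · subst h0; simp [hw] at hb'
        · exact h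
      obtain ⟨i', rfl⟩ : ∃ i', i = i' + 1 := ⟨i - 1, by omega⟩
      have hQ' : w.take (i'+1) = true :: (u ++ [false]).take i' := by
        rw [hw]; simp
      have hwdec : w = w.take (i'+1) ++ false :: w.drop (i'+1+1) := by
        conv_lhs => rw [← List.take_append_drop (i'+1) w,
          ← List.getElem_cons_drop hi, hb']
      have hX : a ++ false :: z ≠ [] := by simp
      have hins1 : ins w (i'+1)
          = (true :: (u ++ [false]).take i') ++ true :: false :: (a ++ false :: z) := by
        rw [ins, hQ', hdec]
      have hw2 : w = (w.take (i'+1) ++ false :: a) ++ (false :: z) := by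
        conv_lhs => rw [hwdec, hdec]
        simp
      have htj : w.take (i'+1+1+a.length) = w.take (i'+1) ++ false :: a := by
        conv_lhs => rw [hw2]
        exact List.take_left' (by simp [List.length_take]; omega)
      have hdj : w.drop (i'+1+1+a.length+1) = z := by
        conv_lhs => rw [hw2, show (w.take (i'+1) ++ false :: a) ++ (false :: z)
          = ((w.take (i'+1) ++ false :: a) ++ [false]) ++ z by simp]
        exact List.drop_left' (by simp [List.length_take]; omega)
      have hins2 : ins w (target w (i'+1))
          = (true :: (u ++ [false]).take i') ++ false :: true :: (a ++ false :: z) := by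
        rw [hj, ins, htj, hdj, hQ']
        rw [show ((true :: (u ++ [false]).take i') ++ false :: a) ++ true :: false :: z
          = (true :: (u ++ [false]).take i') ++ false :: (a ++ true :: false :: z) by simp]
        exact eq1a _ a z hcomm
      right; right
      obtain ⟨h1, h2⟩ := shape_bulk ((u ++ [false]).take i') (a ++ false :: z) hX
      exact ⟨(u ++ [false]).take i', (a ++ false :: z).dropLast,
        by rw [hins1]; exact h1, by rw [hins2]; exact h2⟩
    · -- subcase 1b: i is the last site; extraction at the right boundary
      have hieq : i = u.length + 1 := by
        by_contra h0
        apply hc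
        apply List.findIdx_lt_length_of_exists
        refine ⟨false, ?_, by simp⟩
        have hdw : w.drop (i+1) = u.drop i ++ [false] := by
          rw [hw, show (true : Bool) :: u ++ [false] = (true :: u) ++ [false] from rfl,
            List.drop_append]
          have h1 : i + 1 - (true :: u).length = 0 := by simp; omega
          rw [h1]
          simp
        rw [hdw]; simp
      subst hieq
      have hdnil : w.drop (u.length + 1 + 1) = [] := by
        rw [List.drop_eq_nil_iff]; omega
      have hj : target w (u.length+1)
          = w.length - 1 - (w.reverse.findIdx (fun b => b)) := by
        rw [ht, nextFalseIdx, if_neg hc]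
      have hrx : w.reverse.findIdx (fun b => b) < w.reverse.length := by
        apply List.findIdx_lt_length_of_exists
        exact ⟨true, by simp [hw], by simp⟩
      obtain ⟨a, x, z, hdec, hal, hpx, hall⟩ := findIdx_decomp hrx
      have hx : x = true := hpx
      subst hx
      have hcomm : false :: a.reverse = a.reverse ++ [false] :=
        cons_self_comm (fun y hy => by simpa using hall y (List.mem_reverse.mp hy))
      have hwrev : w = z.reverse ++ true :: a.reverse := by
        have h := congrArg List.reverse hdec
        simpa using h
      have hlens : a.length + 1 + z.length = w.length := by
        have h := congrArg List.length hdec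
        simp at h; omega
      have hj' : target w (u.length+1) = z.length := by
        rw [hj, ← hal]; omega
      have htj : w.take z.length = z.reverse := by
        conv_lhs => rw [hwrev]
        exact List.take_left' (by simp)
      have hdj : w.drop (z.length+1) = a.reverse := by
        conv_lhs => rw [hwrev, show z.reverse ++ true :: a.reverse
          = (z.reverse ++ [true]) ++ a.reverse by simp]
        exact List.drop_left' (by simp)
      have hins1 : ins w (u.length+1) = (true :: u) ++ [true, false] := by
        rw [ins, hdnil, hw, show (true : Bool) :: u ++ [false] = (true :: u) ++ [false] from rfl,
          List.take_left' (by simp)]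
      have hins2 : ins w (target w (u.length+1)) = (true :: u ++ [false]) ++ [false] := by
        rw [hj', ins, htj, hdj, ← hw, hwrev]
        exact eq1b z.reverse a.reverse hcomm
      right; left
      obtain ⟨h1, h2⟩ := shape_beta u
      exact ⟨u, by rw [hins1]; exact h1, by rw [hins2]; exact h2⟩


lemma MTree.numLeaves_forget (M : MTree) : M.forget.numLeaves = M.collapseT.numLeaves + 1 := by
  induction M with
  | mark => rfl
  | nodeL l r ih => simp [MTree.forget, MTree.collapseT, PTree.numLeaves, ih]; omega
  | nodeR l r ih => simp [MTree.forget, MTree.collapseT, PTree.numLeaves, ih]; omega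

lemma target_lt (w : List Bool) (u : List Bool) (hw : w = true :: u ++ [false])
    (i : ℕ) (hi : i < w.length) : target w i < w.length := by
  rw [target]
  split
  · rw [prevTrueIdx]
    split
    · omega
    · apply List.findIdx_lt_length_of_exists
      exact ⟨false, by simp [hw], by simp⟩
  · rw [nextFalseIdx]
    split
    · rename_i h
      have hl : (w.drop (i+1)).length = w.length - (i+1) := by simp
      omega
    · omega

lemma rate_ne_zero_of_shapes {α β : ℝ} (hα : 0 < α) (hβ : 0 < β) {C C' : List Bool}
    (h : (∃ A, C = false :: A ∧ C' = true :: A) ∨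
         (∃ A, C = A ++ [true] ∧ C' = A ++ [false]) ∨
         (∃ A A', C = A ++ true :: false :: A' ∧ C' = A ++ false :: true :: A')) :
    rate α β C C' ≠ 0 := by
  rw [rate]
  split_ifs with h1 h2 h3
  · exact ne_of_gt hα
  · exact ne_of_gt hβ
  · exact one_ne_zero
  · rcases h with ⟨A, hA1, hA2⟩ | ⟨A, hA1, hA2⟩ | ⟨A, A', hA1, hA2⟩
    · exact absurd ⟨A, hA1, hA2⟩ h1
    · exact absurd ⟨A, hA1, hA2⟩ h2
    · exact absurd ⟨A, A', hA1, hA2⟩ h3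


/-- if `T̂ = π(T̂')` then the TASEP allows the transition
`R(f(T̂')) → R(f(T̂))`, i.e. `W(C' → C) ≠ 0`. -/
theorem rate_ne_zero_along_pi (n : ℕ) (hn : 1 ≤ n) (α β : ℝ)
    (hα : α ∈ Set.Ioc (0:ℝ) 1) (hβ : β ∈ Set.Ioc (0:ℝ) 1)
    (M : MTree) (hM : M.forget.numLeaves = n + 2) :
    rate α β M.forget.red (piM M).forget.red ≠ 0 := by
  obtain ⟨hα0, -⟩ := hα
  obtain ⟨hβ0, -⟩ := hβ
  have hnum : M.collapseT.numLeaves + 1 = n + 2 := by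
    rw [← M.numLeaves_forget, hM]
  obtain ⟨l, r, hT⟩ : ∃ l r, M.collapseT = PTree.node l r := by
    cases h : M.collapseT with
    | leaf => rw [h] at hnum; simp [PTree.numLeaves] at hnum; omega
    | node l r => exact ⟨l, r, rfl⟩
  have hwlen : M.collapseT.dirs.length = M.collapseT.numLeaves := by
    rw [hT]
    show (l.dirsAux true ++ r.dirsAux false).length = _
    simp [PTree.length_dirsAux, PTree.numLeaves]
  have hi : M.markIdx < M.collapseT.dirs.length := by
    rw [hwlen]; exact M.markIdx_lt
  obtain ⟨u, hwu⟩ : ∃ u, M.collapseT.dirs = true :: u ++ [false] := by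
    have h1 : (M.collapseT.dirs).head? = some true := by
      rw [hT]
      show (l.dirsAux true ++ r.dirsAux false).head? = some true
      rw [List.head?_append]
      simp [head_dirsAux_true]
    have h2 : (M.collapseT.dirs).getLast? = some false := by
      rw [hT]
      show (l.dirsAux true ++ r.dirsAux false).getLast? = some false
      rw [List.getLast?_append]
      simp [getLast_dirsAux_false]
    cases hww : M.collapseT.dirs with
    | nil => rw [hww] at h1; simp at h1
    | cons y t =>
        rw [hww] at h1 h2
        simp at h1
        subst h1
        have ht0 : t ≠ [] := by
          intro h0; subst h0; simp at h2
        refine ⟨t.dropLast, ?_⟩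
        have hg : t.getLast ht0 = false := by
          have h3 := List.getLast?_eq_getLast (l := true :: t) (by simp)
          rw [h3] at h2
          have h4 : (true :: t).getLast (by simp) = t.getLast ht0 :=
            List.getLast_cons ht0
          rw [h4] at h2
          exact Option.some_injective _ h2
        conv_lhs => rw [← List.dropLast_append_getLast ht0]
        rw [hg]
        simp
  have hjlt : target M.collapseT.dirs M.markIdx < M.collapseT.dirs.length :=
    target_lt _ u hwu _ hi
  have hd1 : M.forget.dirs = ins M.collapseT.dirs M.markIdx := by
    conv_lhs => rw [← M.expand_collapse]
    rw [hT, dirs_forget_expand l r _ (by rw [← hT]; exact M.markIdx_lt)]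
    rw [← hT]
    rfl
  have hd2 : (piM M).forget.dirs
      = ins M.collapseT.dirs (target M.collapseT.dirs M.markIdx) := by
    rw [piM, hT, dirs_forget_expand l r _ (by rw [← hT, ← hwlen]; exact hjlt)]
    rw [← hT]
    rfl
  have e1 : M.forget.red = red1 (ins M.collapseT.dirs M.markIdx) := by
    rw [show M.forget.red = red1 M.forget.dirs from rfl, hd1]
  have e2 : (piM M).forget.red
      = red1 (ins M.collapseT.dirs (target M.collapseT.dirs M.markIdx)) := by
    rw [show (piM M).forget.red = red1 (piM M).forget.dirs from rfl, hd2]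
  apply rate_ne_zero_of_shapes hα0 hβ0
  rw [e1, e2]
  exact key M.collapseT.dirs u hwu M.markIdx hi
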